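/- If K ≥ N, then there exists a quantizer Q : Fin M → Fin K whose range has at most N elements and which satisfies e_Q = ∑_{j ∈ Fin M} max_{i ∈ Fin N} p i j; moreover every quantizer Q' : Fin M → Fin K satisfies e_{Q'} ≤ e_Q. (Paper's Theorem 3(b): when K > N, e^max is achieved by a quantizer with only N nonempty partitions.) -/
import Mathlib


open Finset

/-- The maximum of a real-valued vector over the finite index set `Fin N` (`N > 0`). -/
noncomputable def colMax {N : ℕ} (hN : 0 < N) (v : Fin N → ℝ) : ℝ :=
  Finset.univ.sup' (Finset.univ_nonempty_iff.mpr ⟨⟨0, hN⟩⟩) v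

/-- The value `e_Q` induced by a quantizer `Q : Fin M → Fin K` on a joint matrix `p`:
`e_Q = ∑_k max_i ∑_{j : Q j = k} p i j`. -/
noncomputable def eQ {N M K : ℕ} (hN : 0 < N) (p : Fin N → Fin M → ℝ)
    (Q : Fin M → Fin K) : ℝ :=
  ∑ k, colMax hN (fun i => ∑ j ∈ Finset.univ.filter (fun j => Q j = k), p i j)

/-- Paper's Theorem 3(b): when `K ≥ N`, the maximal value `e^max` is achieved by a
quantizer using at most `N` nonempty cells. -/
theorem emax_with_N_cells (N M K : ℕ) (hN : 1 ≤ N) (hM : 1 ≤ M) (hK : 1 ≤ K)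
    (hKN : N ≤ K)
    (p : Fin N → Fin M → ℝ) (hp : ∀ i j, 0 ≤ p i j) :
    ∃ Q : Fin M → Fin K,
      (Finset.univ.image Q).card ≤ N ∧
      eQ (by omega) p Q = (∑ j, colMax (by omega : 0 < N) (fun i => p i j)) ∧
      ∀ Q' : Fin M → Fin K, eQ (by omega) p Q' ≤ eQ (by omega) p Q := by
  classical
  have hN0 : 0 < N := hN
  have hne : (Finset.univ : Finset (Fin N)).Nonempty := Finset.univ_nonempty_iff.mpr ⟨⟨0, hN0⟩⟩
  -- general upper bound
  have hub : ∀ Q' : Fin M → Fin K, eQ hN0 p Q' ≤ ∑ j, colMax hN0 (fun i => p i j) := by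
    intro Q'
    unfold eQ
    rw [← Finset.sum_fiberwise Finset.univ Q' (fun j => colMax hN0 (fun i => p i j))]
    apply Finset.sum_le_sum
    intro k _
    apply Finset.sup'_le
    intro i _
    apply Finset.sum_le_sum
    intro j _
    exact Finset.le_sup' (fun i => p i j) (Finset.mem_univ i)
  -- argmax selection
  have hsel : ∀ j : Fin M, ∃ i : Fin N, colMax hN0 (fun i => p i j) = p i j := by
    intro j
    obtain ⟨i, _, hi⟩ := Finset.exists_mem_eq_sup' hne (fun i => p i j)
    exact ⟨i, hi⟩
  choose f hf using hsel
  have hembinj : Function.Injective (Fin.castLE hKN) := Fin.castLE_injective hKN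
  set Q : Fin M → Fin K := fun j => Fin.castLE hKN (f j) with hQdef
  have hlb : (∑ j, colMax hN0 (fun i => p i j)) ≤ eQ hN0 p Q := by
    unfold eQ
    rw [← Finset.sum_fiberwise Finset.univ Q (fun j => colMax hN0 (fun i => p i j))]
    apply Finset.sum_le_sum
    intro k _
    show ∑ j ∈ Finset.univ.filter (fun j => Q j = k), colMax hN0 (fun i => p i j)
        ≤ Finset.univ.sup' hne (fun i => ∑ j ∈ Finset.univ.filter (fun j => Q j = k), p i j)
    rcases (Finset.univ.filter fun j => Q j = k).eq_empty_or_nonempty with he | ⟨j0, hj0⟩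
    · rw [he]
      simp only [Finset.sum_empty]
      refine le_trans ?_ (Finset.le_sup' _ (Finset.mem_univ ⟨0, hN0⟩))
      simp [he]
    · have hsum : ∑ j ∈ Finset.univ.filter (fun j => Q j = k), colMax hN0 (fun i => p i j)
          = ∑ j ∈ Finset.univ.filter (fun j => Q j = k), p (f j0) j := by
        apply Finset.sum_congr rfl
        intro j hj
        simp only [Finset.mem_filter, hQdef] at hj hj0
        have : f j = f j0 := hembinj (hj.2.trans hj0.2.symm)
        rw [hf j, this]
      rw [hsum]
      exact Finset.le_sup' (fun i => ∑ j ∈ Finset.univ.filter (fun j => Q j = k), p i j)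
        (Finset.mem_univ (f j0))
  have heq : eQ hN0 p Q = ∑ j, colMax hN0 (fun i => p i j) := le_antisymm (hub Q) hlb
  refine ⟨Q, ?_, heq, fun Q' => (hub Q').trans heq.ge⟩
  calc (Finset.univ.image Q).card
      ≤ (Finset.univ.image (Fin.castLE hKN) : Finset (Fin K)).card := by
        apply Finset.card_le_card
        intro k hk
        simp only [Finset.mem_image, hQdef] at hk ⊢
        obtain ⟨j, _, hj⟩ := hk
        exact ⟨f j, Finset.mem_univ _, hj⟩
    _ ≤ (Finset.univ : Finset (Fin N)).card := Finset.card_image_le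
    _ = N := by simp
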